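/- Let Ω ⊆ ℝ⁵ be open and let G, H : Ω → ℝ be smooth. Let z₁ and z₂ be two smooth solutions of the PDE system z_y = G(x,y,z,z_x,z_xx), z_xxx = H(x,y,z,z_x,z_xx) on a connected open set V ⊆ ℝ², both with 2-jet maps taking values in Ω. If at some point (x₀,y₀) ∈ V one has z₁(x₀,y₀) = z₂(x₀,y₀), ∂z₁/∂x(x₀,y₀) = ∂z₂/∂x(x₀,y₀) and ∂²z₁/∂x²(x₀,y₀) = ∂²z₂/∂x²(x₀,y₀), then z₁ = z₂ on V. -/

import Mathlib

open Set Filter Topology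


/-- Partial derivative of a function on `ℝ⁵` (coordinates `(x,y,z,p,r)` indexed `0,…,4`)
in the `i`-th coordinate direction. -/
noncomputable def pd (i : Fin 5) (F : (Fin 5 → ℝ) → ℝ) (v : Fin 5 → ℝ) : ℝ :=
  fderiv ℝ F v (Pi.single i 1)

/-- The total derivative operator `D F = F_x + p F_z + r F_p + H F_r`. -/
noncomputable def Dop (H : (Fin 5 → ℝ) → ℝ) (F : (Fin 5 → ℝ) → ℝ) (v : Fin 5 → ℝ) : ℝ :=
  pd 0 F v + v 3 * pd 2 F v + v 4 * pd 3 F v + H v * pd 4 F v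

/-- The operator `Δ F = F_y + G F_z + (DG) F_p + (D²G) F_r`. -/
noncomputable def Delta (G H : (Fin 5 → ℝ) → ℝ) (F : (Fin 5 → ℝ) → ℝ) (v : Fin 5 → ℝ) : ℝ :=
  pd 1 F v + G v * pd 2 F v + Dop H G v * pd 3 F v + Dop H (Dop H G) v * pd 4 F v

/-- `z_x`. -/
noncomputable def zx (z : ℝ → ℝ → ℝ) (x y : ℝ) : ℝ := deriv (fun t => z t y) x
/-- `z_xx`. -/
noncomputable def zxx (z : ℝ → ℝ → ℝ) (x y : ℝ) : ℝ := deriv (fun t => zx z t y) x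
/-- `z_xxx`. -/
noncomputable def zxxx (z : ℝ → ℝ → ℝ) (x y : ℝ) : ℝ := deriv (fun t => zxx z t y) x
/-- `z_y`. -/
noncomputable def zy (z : ℝ → ℝ → ℝ) (x y : ℝ) : ℝ := deriv (fun s => z x s) y

/-- The 2-jet map `j(x,y) = (x, y, z(x,y), z_x(x,y), z_xx(x,y))`. -/
noncomputable def jet (z : ℝ → ℝ → ℝ) (q : ℝ × ℝ) : Fin 5 → ℝ :=
  ![q.1, q.2, z q.1 q.2, zx z q.1 q.2, zxx z q.1 q.2]

/-- `z` is a smooth solution of the PDE system `z_y = G∘j`, `z_xxx = H∘j` on `U`,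
with 2-jet map taking values in `Ω`. -/
def IsSolution (Ω : Set (Fin 5 → ℝ)) (G H : (Fin 5 → ℝ) → ℝ)
    (U : Set (ℝ × ℝ)) (z : ℝ → ℝ → ℝ) : Prop :=
  ContDiffOn ℝ (⊤ : ℕ∞) (fun q : ℝ × ℝ => z q.1 q.2) U ∧
  (∀ q ∈ U, jet z q ∈ Ω) ∧
  (∀ q ∈ U, zy z q.1 q.2 = G (jet z q)) ∧
  (∀ q ∈ U, zxxx z q.1 q.2 = H (jet z q))

lemma aux_top_add_one_le : ((⊤:ℕ∞) : WithTop ℕ∞) + 1 ≤ ((⊤:ℕ∞) : WithTop ℕ∞) := by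
  rw [show ((1:WithTop ℕ∞)) = ((1:ℕ∞) : WithTop ℕ∞) by rfl, ← WithTop.coe_add, WithTop.coe_le_coe]
  simp

lemma aux_two_le : (2 : WithTop ℕ∞) ≤ ((⊤:ℕ∞) : WithTop ℕ∞) := by
  rw [show ((2:WithTop ℕ∞)) = ((2:ℕ∞) : WithTop ℕ∞) by rfl, WithTop.coe_le_coe]; exact le_top

lemma aux_one_le : (1 : WithTop ℕ∞) ≤ ((⊤:ℕ∞) : WithTop ℕ∞) := by
  rw [show ((1:WithTop ℕ∞)) = ((1:ℕ∞) : WithTop ℕ∞) by rfl, WithTop.coe_le_coe]; exact le_top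

lemma clm_expand (L : (Fin 5 → ℝ) →L[ℝ] ℝ) (u : Fin 5 → ℝ) :
    L u = u 0 * L (Pi.single 0 1) + u 1 * L (Pi.single 1 1) + u 2 * L (Pi.single 2 1)
      + u 3 * L (Pi.single 3 1) + u 4 * L (Pi.single 4 1) := by
  have hu : u = ∑ i : Fin 5, u i • (Pi.single i 1 : Fin 5 → ℝ) := by
    funext j
    rw [Finset.sum_apply]
    simp [Pi.single_apply, Fin.sum_univ_five]
  conv_lhs => rw [hu]
  simp [Fin.sum_univ_five, map_add, map_smul, smul_eq_mul]

lemma contDiffAt_pd {Ω : Set (Fin 5 → ℝ)} {Φ : (Fin 5 → ℝ) → ℝ}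
    (hΦ : ∀ w ∈ Ω, ContDiffAt ℝ (⊤:ℕ∞) Φ w) (i : Fin 5) :
    ∀ w ∈ Ω, ContDiffAt ℝ (⊤:ℕ∞) (pd i Φ) w := fun w hw =>
  ((hΦ w hw).fderiv_right aux_top_add_one_le).clm_apply contDiffAt_const

lemma contDiffAt_Dop {Ω : Set (Fin 5 → ℝ)} {H Φ : (Fin 5 → ℝ) → ℝ}
    (hH : ∀ w ∈ Ω, ContDiffAt ℝ (⊤:ℕ∞) H w) (hΦ : ∀ w ∈ Ω, ContDiffAt ℝ (⊤:ℕ∞) Φ w) :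
    ∀ w ∈ Ω, ContDiffAt ℝ (⊤:ℕ∞) (Dop H Φ) w := by
  intro w hw
  have hproj : ∀ i : Fin 5, ContDiffAt ℝ (⊤:ℕ∞) (fun v : Fin 5 → ℝ => v i) w := fun i =>
    (ContinuousLinearMap.proj (R := ℝ) (φ := fun _ : Fin 5 => ℝ) i).contDiff.contDiffAt
  exact ((((contDiffAt_pd hΦ 0 w hw).add ((hproj 3).mul (contDiffAt_pd hΦ 2 w hw))).add
    ((hproj 4).mul (contDiffAt_pd hΦ 3 w hw))).add ((hH w hw).mul (contDiffAt_pd hΦ 4 w hw)))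

lemma hasDerivAt_sliceX {φ : ℝ×ℝ → ℝ} {q : ℝ×ℝ} (h : DifferentiableAt ℝ φ q) :
    HasDerivAt (fun t => φ (t, q.2)) (fderiv ℝ φ q (1,0)) q.1 :=
  h.hasFDerivAt.comp_hasDerivAt q.1 ((hasDerivAt_id q.1).prodMk (hasDerivAt_const _ _))

lemma hasDerivAt_sliceY {φ : ℝ×ℝ → ℝ} {q : ℝ×ℝ} (h : DifferentiableAt ℝ φ q) :
    HasDerivAt (fun s => φ (q.1, s)) (fderiv ℝ φ q (0,1)) q.2 :=
  h.hasFDerivAt.comp_hasDerivAt q.2 ((hasDerivAt_const _ _).prodMk (hasDerivAt_id q.2))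

lemma fderiv_fderiv_apply {φ : ℝ×ℝ → ℝ} {q : ℝ×ℝ} (h : ContDiffAt ℝ (⊤:ℕ∞) φ q) (v w : ℝ×ℝ) :
    fderiv ℝ (fun q' => fderiv ℝ φ q' w) q v = fderiv ℝ (fderiv ℝ φ) q v w := by
  have hd : DifferentiableAt ℝ (fderiv ℝ φ) q :=
    (h.fderiv_right aux_top_add_one_le).differentiableAt (by simp)
  have hc : HasFDerivAt (fun q' => fderiv ℝ φ q' w)
      ((ContinuousLinearMap.apply ℝ ℝ w).comp (fderiv ℝ (fderiv ℝ φ) q)) q :=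
    (ContinuousLinearMap.apply ℝ ℝ w).hasFDerivAt.comp q hd.hasFDerivAt
  rw [hc.fderiv]; rfl

lemma swap_mixed {φ : ℝ×ℝ → ℝ} {q : ℝ×ℝ} (h : ContDiffAt ℝ (⊤:ℕ∞) φ q) (v w : ℝ×ℝ) :
    fderiv ℝ (fun q' => fderiv ℝ φ q' w) q v = fderiv ℝ (fun q' => fderiv ℝ φ q' v) q w := by
  rw [fderiv_fderiv_apply h, fderiv_fderiv_apply h]
  exact h.isSymmSndFDerivAt (by simpa using aux_two_le) v w

lemma lipschitzOnWith_weaken {E F : Type*} [PseudoEMetricSpace E] [PseudoEMetricSpace F]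
    {K K' : NNReal} {f : E → F} {s : Set E} (h : LipschitzOnWith K f s) (hK : K ≤ K') :
    LipschitzOnWith K' f s := fun x hx y hy =>
  le_trans (h hx hy) (mul_le_mul_left (ENNReal.coe_le_coe.2 hK) _)

noncomputable def Avec (H : (Fin 5 → ℝ) → ℝ) (v : Fin 5 → ℝ) : Fin 5 → ℝ :=
  ![1, 0, v 3, v 4, H v]
noncomputable def Bvec (G H : (Fin 5 → ℝ) → ℝ) (v : Fin 5 → ℝ) : Fin 5 → ℝ :=
  ![0, 1, G v, Dop H G v, Dop H (Dop H G) v]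

lemma jet_ODE {Ω : Set (Fin 5 → ℝ)} (hΩ : IsOpen Ω) {G H : (Fin 5 → ℝ) → ℝ}
    (hG : ContDiffOn ℝ (⊤:ℕ∞) G Ω) (hH : ContDiffOn ℝ (⊤:ℕ∞) H Ω)
    {V : Set (ℝ×ℝ)} (hV : IsOpen V) {z : ℝ → ℝ → ℝ} (hz : IsSolution Ω G H V z) :
    (∀ q ∈ V, ContinuousAt (jet z) q) ∧
    (∀ q ∈ V, HasDerivAt (fun t => jet z (t, q.2)) (Avec H (jet z q)) q.1) ∧
    (∀ q ∈ V, HasDerivAt (fun s => jet z (q.1, s)) (Bvec G H (jet z q)) q.2) := by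
  obtain ⟨hsm, hmem, hyG, hxH⟩ := hz
  set f : ℝ×ℝ → ℝ := fun q => z q.1 q.2 with hfdef
  have hfC : ∀ q ∈ V, ContDiffAt ℝ (⊤:ℕ∞) f q := fun q hq => hsm.contDiffAt (hV.mem_nhds hq)
  set g1 : ℝ×ℝ → ℝ := fun q => fderiv ℝ f q (1,0) with hg1def
  set g2 : ℝ×ℝ → ℝ := fun q => fderiv ℝ g1 q (1,0) with hg2def
  have hg1C : ∀ q ∈ V, ContDiffAt ℝ (⊤:ℕ∞) g1 q := fun q hq =>
    ((hfC q hq).fderiv_right aux_top_add_one_le).clm_apply contDiffAt_const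
  have hg2C : ∀ q ∈ V, ContDiffAt ℝ (⊤:ℕ∞) g2 q := fun q hq =>
    ((hg1C q hq).fderiv_right aux_top_add_one_le).clm_apply contDiffAt_const
  have hfd : ∀ q ∈ V, DifferentiableAt ℝ f q := fun q hq =>
    (hfC q hq).differentiableAt (by simp)
  have hg1d : ∀ q ∈ V, DifferentiableAt ℝ g1 q := fun q hq =>
    (hg1C q hq).differentiableAt (by simp)
  have hg2d : ∀ q ∈ V, DifferentiableAt ℝ g2 q := fun q hq =>
    (hg2C q hq).differentiableAt (by simp)
  have hzx : ∀ q ∈ V, zx z q.1 q.2 = g1 q := fun q hq => (hasDerivAt_sliceX (hfd q hq)).deriv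
  have hzy : ∀ q ∈ V, zy z q.1 q.2 = fderiv ℝ f q (0,1) := fun q hq =>
    (hasDerivAt_sliceY (hfd q hq)).deriv
  have hmemx : ∀ q ∈ V, ∀ᶠ t in 𝓝 q.1, (t, q.2) ∈ V := by
    intro q hq
    have : ContinuousAt (fun t : ℝ => (t, q.2)) q.1 := continuousAt_id.prodMk continuousAt_const
    exact this (hV.mem_nhds (by simpa using hq))
  have hmemy : ∀ q ∈ V, ∀ᶠ s in 𝓝 q.2, (q.1, s) ∈ V := by
    intro q hq
    have : ContinuousAt (fun s : ℝ => (q.1, s)) q.2 := continuousAt_const.prodMk continuousAt_id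
    exact this (hV.mem_nhds (by simpa using hq))
  have hzxx : ∀ q ∈ V, zxx z q.1 q.2 = g2 q := by
    intro q hq
    have h1 : HasDerivAt (fun t => g1 (t, q.2)) (g2 q) q.1 := hasDerivAt_sliceX (hg1d q hq)
    exact (h1.congr_of_eventuallyEq (((hmemx q hq).mono (fun t ht => hzx (t, q.2) ht)))).deriv
  have hzxxx : ∀ q ∈ V, zxxx z q.1 q.2 = fderiv ℝ g2 q (1,0) := by
    intro q hq
    have h1 : HasDerivAt (fun t => g2 (t, q.2)) (fderiv ℝ g2 q (1,0)) q.1 :=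
      hasDerivAt_sliceX (hg2d q hq)
    exact (h1.congr_of_eventuallyEq (((hmemx q hq).mono (fun t ht => hzxx (t, q.2) ht)))).deriv
  set J : ℝ×ℝ → (Fin 5 → ℝ) := fun q => ![q.1, q.2, f q, g1 q, g2 q] with hJdef
  have hJeq : ∀ q ∈ V, jet z q = J q := by
    intro q hq; funext i; fin_cases i <;>
      simp [jet, J, f, hzx q hq, hzxx q hq]
  have hJev : ∀ q ∈ V, jet z =ᶠ[𝓝 q] J := fun q hq =>
    eventually_of_mem (hV.mem_nhds hq) (fun x hx => hJeq x hx)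
  set DJ : ℝ×ℝ → (ℝ×ℝ →L[ℝ] (Fin 5 → ℝ)) := fun q => ContinuousLinearMap.pi
    ![ContinuousLinearMap.fst ℝ ℝ ℝ, ContinuousLinearMap.snd ℝ ℝ ℝ,
      fderiv ℝ f q, fderiv ℝ g1 q, fderiv ℝ g2 q] with hDJdef
  have hJD : ∀ q ∈ V, HasFDerivAt J (DJ q) q := by
    intro q hq
    apply hasFDerivAt_pi''
    intro i
    fin_cases i <;>
      simp only [J, DJ, ContinuousLinearMap.proj_pi, Matrix.cons_val_zero, Matrix.cons_val_one,
        Matrix.head_cons, Matrix.cons_val_two, Matrix.tail_cons, Matrix.cons_val_three,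
        Matrix.cons_val_four]
    · exact hasFDerivAt_fst
    · exact hasFDerivAt_snd
    · exact (hfd q hq).hasFDerivAt
    · exact (hg1d q hq).hasFDerivAt
    · exact (hg2d q hq).hasFDerivAt
  have hDJx : ∀ q ∈ V, DJ q (1,0) = ![1, 0, g1 q, g2 q, H (jet z q)] := by
    intro q hq
    funext i
    fin_cases i
    · rfl
    · rfl
    · rfl
    · rfl
    · show (fderiv ℝ g2 q) (1,0) = H (jet z q)
      rw [← hzxxx q hq]; exact hxH q hq
  have chainX : ∀ Φ : (Fin 5 → ℝ) → ℝ, ∀ q ∈ V, DifferentiableAt ℝ Φ (jet z q) →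
      DifferentiableAt ℝ (fun q' => Φ (jet z q')) q ∧
      fderiv ℝ (fun q' => Φ (jet z q')) q (1,0) = Dop H Φ (jet z q) := by
    intro Φ q hq hΦ
    have hΦ' : HasFDerivAt Φ (fderiv ℝ Φ (jet z q)) (J q) := by
      rw [← hJeq q hq]; exact hΦ.hasFDerivAt
    have hcomp : HasFDerivAt (fun q' => Φ (J q')) ((fderiv ℝ Φ (jet z q)).comp (DJ q)) q :=
      hΦ'.comp q (hJD q hq)
    have hev : (fun q' => Φ (jet z q')) =ᶠ[𝓝 q] (fun q' => Φ (J q')) :=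
      (hJev q hq).mono (fun x hx => congrArg Φ hx)
    have hcomp' : HasFDerivAt (fun q' => Φ (jet z q')) ((fderiv ℝ Φ (jet z q)).comp (DJ q)) q :=
      hcomp.congr_of_eventuallyEq hev
    refine ⟨hcomp'.differentiableAt, ?_⟩
    rw [hcomp'.fderiv]
    have : ((fderiv ℝ Φ (jet z q)).comp (DJ q)) (1,0) = fderiv ℝ Φ (jet z q) (DJ q (1,0)) := rfl
    rw [this, hDJx q hq, clm_expand]
    simp only [Matrix.cons_val_zero, Matrix.cons_val_one, Matrix.head_cons, Matrix.cons_val_two,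
      Matrix.tail_cons, Matrix.cons_val_three, Matrix.cons_val_four]
    have h3 : jet z q 3 = g1 q := by rw [← hzx q hq]; simp [jet]
    have h4 : jet z q 4 = g2 q := by rw [← hzxx q hq]; simp [jet]
    simp only [Dop, pd, h3, h4]
    ring
  have hGC : ∀ w ∈ Ω, ContDiffAt ℝ (⊤:ℕ∞) G w := fun w hw => hG.contDiffAt (hΩ.mem_nhds hw)
  have hHC : ∀ w ∈ Ω, ContDiffAt ℝ (⊤:ℕ∞) H w := fun w hw => hH.contDiffAt (hΩ.mem_nhds hw)
  have hDopGC : ∀ w ∈ Ω, ContDiffAt ℝ (⊤:ℕ∞) (Dop H G) w := contDiffAt_Dop hHC hGC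
  have hfy_eq : ∀ q ∈ V, fderiv ℝ f q (0,1) = G (jet z q) := fun q hq => by
    rw [← hzy q hq]; exact hyG q hq
  have hg1y : ∀ q ∈ V, fderiv ℝ g1 q (0,1) = Dop H G (jet z q) := by
    intro q hq
    have h1 : fderiv ℝ g1 q (0,1) = fderiv ℝ (fun q' => fderiv ℝ f q' (0,1)) q (1,0) :=
      swap_mixed (hfC q hq) (0,1) (1,0)
    have hev : (fun q' => fderiv ℝ f q' (0,1)) =ᶠ[𝓝 q] (fun q' => G (jet z q')) :=
      eventually_of_mem (hV.mem_nhds hq) (fun x hx => hfy_eq x hx)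
    rw [h1, hev.fderiv_eq]
    exact (chainX G q hq ((hGC _ (hmem q hq)).differentiableAt (by simp))).2
  have hg2y : ∀ q ∈ V, fderiv ℝ g2 q (0,1) = Dop H (Dop H G) (jet z q) := by
    intro q hq
    have h1 : fderiv ℝ g2 q (0,1) = fderiv ℝ (fun q' => fderiv ℝ g1 q' (0,1)) q (1,0) :=
      swap_mixed (hg1C q hq) (0,1) (1,0)
    have hev : (fun q' => fderiv ℝ g1 q' (0,1)) =ᶠ[𝓝 q] (fun q' => Dop H G (jet z q')) :=
      eventually_of_mem (hV.mem_nhds hq) (fun x hx => hg1y x hx)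
    rw [h1, hev.fderiv_eq]
    exact (chainX (Dop H G) q hq ((hDopGC _ (hmem q hq)).differentiableAt (by simp))).2
  refine ⟨?_, ?_, ?_⟩
  · intro q hq
    have hJcont : ContinuousAt J q := by
      apply continuousAt_pi.2
      intro i
      fin_cases i
      · exact continuousAt_fst
      · exact continuousAt_snd
      · exact (hfC q hq).continuousAt
      · exact (hg1C q hq).continuousAt
      · exact (hg2C q hq).continuousAt
    exact hJcont.congr (hJev q hq).symm
  · intro q hq
    have hJl : HasDerivAt (fun t => J (t, q.2)) (Avec H (jet z q)) q.1 := by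
      apply hasDerivAt_pi.2
      intro i
      fin_cases i
      · exact hasDerivAt_id q.1
      · exact hasDerivAt_const _ _
      · show HasDerivAt (fun t => f (t, q.2)) (jet z q 3) q.1
        have : jet z q 3 = g1 q := by rw [← hzx q hq]; simp [jet]
        rw [this]
        exact hasDerivAt_sliceX (hfd q hq)
      · show HasDerivAt (fun t => g1 (t, q.2)) (jet z q 4) q.1
        have : jet z q 4 = g2 q := by rw [← hzxx q hq]; simp [jet]
        rw [this]
        exact hasDerivAt_sliceX (hg1d q hq)
      · show HasDerivAt (fun t => g2 (t, q.2)) (H (jet z q)) q.1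
        rw [← hxH q hq, hzxxx q hq]
        exact hasDerivAt_sliceX (hg2d q hq)
    exact hJl.congr_of_eventuallyEq ((hmemx q hq).mono (fun t ht => hJeq _ ht))
  · intro q hq
    have hJl : HasDerivAt (fun s => J (q.1, s)) (Bvec G H (jet z q)) q.2 := by
      apply hasDerivAt_pi.2
      intro i
      fin_cases i
      · exact hasDerivAt_const _ _
      · exact hasDerivAt_id q.2
      · show HasDerivAt (fun s => f (q.1, s)) (G (jet z q)) q.2
        rw [← hfy_eq q hq]
        exact hasDerivAt_sliceY (hfd q hq)
      · show HasDerivAt (fun s => g1 (q.1, s)) (Dop H G (jet z q)) q.2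
        rw [← hg1y q hq]
        exact hasDerivAt_sliceY (hg1d q hq)
      · show HasDerivAt (fun s => g2 (q.1, s)) (Dop H (Dop H G) (jet z q)) q.2
        rw [← hg2y q hq]
        exact hasDerivAt_sliceY (hg2d q hq)
    exact hJl.congr_of_eventuallyEq ((hmemy q hq).mono (fun s hs => hJeq _ hs))

/-- Two smooth solutions of the PDE system on a connected open set whose
2-jets agree at one point coincide: the general solution depends on exactly three constants. -/
theorem uniqueness_of_solutions
    (Ω : Set (Fin 5 → ℝ)) (hΩ : IsOpen Ω) (G H : (Fin 5 → ℝ) → ℝ)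
    (hG : ContDiffOn ℝ (⊤ : ℕ∞) G Ω) (hH : ContDiffOn ℝ (⊤ : ℕ∞) H Ω)
    (V : Set (ℝ × ℝ)) (hV : IsOpen V) (hVconn : IsConnected V)
    (z₁ z₂ : ℝ → ℝ → ℝ)
    (hz₁ : IsSolution Ω G H V z₁) (hz₂ : IsSolution Ω G H V z₂)
    (q₀ : ℝ × ℝ) (hq₀ : q₀ ∈ V)
    (h0 : z₁ q₀.1 q₀.2 = z₂ q₀.1 q₀.2)
    (h1 : zx z₁ q₀.1 q₀.2 = zx z₂ q₀.1 q₀.2)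
    (h2 : zxx z₁ q₀.1 q₀.2 = zxx z₂ q₀.1 q₀.2) :
    ∀ q ∈ V, z₁ q.1 q.2 = z₂ q.1 q.2 := by
  obtain ⟨hc₁, hX₁, hY₁⟩ := jet_ODE hΩ hG hH hV hz₁
  obtain ⟨hc₂, hX₂, hY₂⟩ := jet_ODE hΩ hG hH hV hz₂
  have hGC : ∀ w ∈ Ω, ContDiffAt ℝ (⊤:ℕ∞) G w := fun w hw => hG.contDiffAt (hΩ.mem_nhds hw)
  have hHC : ∀ w ∈ Ω, ContDiffAt ℝ (⊤:ℕ∞) H w := fun w hw => hH.contDiffAt (hΩ.mem_nhds hw)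
  have hDopGC : ∀ w ∈ Ω, ContDiffAt ℝ (⊤:ℕ∞) (Dop H G) w := contDiffAt_Dop hHC hGC
  have hDopGC2 : ∀ w ∈ Ω, ContDiffAt ℝ (⊤:ℕ∞) (Dop H (Dop H G)) w := contDiffAt_Dop hHC hDopGC
  set S : Set (ℝ×ℝ) := {q | q ∈ V ∧ jet z₁ q = jet z₂ q} with hSdef
  set T : Set (ℝ×ℝ) := {q | q ∈ V ∧ jet z₁ q ≠ jet z₂ q} with hTdef
  have hSopen : IsOpen S := by
    rw [isOpen_iff_mem_nhds]
    rintro q ⟨hqV, hqJ⟩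
    have hv₀ : jet z₁ q ∈ Ω := hz₁.2.1 q hqV
    have hA1 : ContDiffAt ℝ 1 (Avec H) (jet z₁ q) := by
      apply contDiffAt_pi.2
      intro i
      fin_cases i
      · exact contDiffAt_const
      · exact contDiffAt_const
      · exact ((ContinuousLinearMap.proj (R := ℝ) (φ := fun _ : Fin 5 => ℝ)
          (3 : Fin 5)).contDiff.contDiffAt)
      · exact ((ContinuousLinearMap.proj (R := ℝ) (φ := fun _ : Fin 5 => ℝ)
          (4 : Fin 5)).contDiff.contDiffAt)
      · exact (hHC _ hv₀).of_le aux_one_le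
    have hB1 : ContDiffAt ℝ 1 (Bvec G H) (jet z₁ q) := by
      apply contDiffAt_pi.2
      intro i
      fin_cases i
      · exact contDiffAt_const
      · exact contDiffAt_const
      · exact (hGC _ hv₀).of_le aux_one_le
      · exact (hDopGC _ hv₀).of_le aux_one_le
      · exact (hDopGC2 _ hv₀).of_le aux_one_le
    obtain ⟨K₁, s₁, hs₁, hl₁⟩ := hA1.exists_lipschitzOnWith
    obtain ⟨K₂, s₂, hs₂, hl₂⟩ := hB1.exists_lipschitzOnWith
    have hKl1 : LipschitzOnWith (K₁ ⊔ K₂) (Avec H) (s₁ ∩ s₂) :=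
      lipschitzOnWith_weaken (hl₁.mono inter_subset_left) le_sup_left
    have hKl2 : LipschitzOnWith (K₁ ⊔ K₂) (Bvec G H) (s₁ ∩ s₂) :=
      lipschitzOnWith_weaken (hl₂.mono inter_subset_right) le_sup_right
    have hnb : {q' | q' ∈ V ∧ jet z₁ q' ∈ s₁ ∩ s₂ ∧ jet z₂ q' ∈ s₁ ∩ s₂} ∈ 𝓝 q := by
      have hm1 : s₁ ∩ s₂ ∈ 𝓝 (jet z₁ q) := inter_mem hs₁ hs₂
      have hm2 : s₁ ∩ s₂ ∈ 𝓝 (jet z₂ q) := by rw [← hqJ]; exact hm1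
      filter_upwards [hV.mem_nhds hqV, (hc₁ q hqV) hm1, (hc₂ q hqV) hm2] with q' h h1' h2'
      exact ⟨h, h1', h2'⟩
    obtain ⟨δ, hδpos, hball⟩ := Metric.mem_nhds_iff.1 hnb
    have hball' : ∀ x y : ℝ, |x - q.1| < δ → |y - q.2| < δ →
        (x, y) ∈ V ∧ jet z₁ (x, y) ∈ s₁ ∩ s₂ ∧ jet z₂ (x, y) ∈ s₁ ∩ s₂ := by
      intro x y hx hy
      apply hball
      rw [Metric.mem_ball, Prod.dist_eq]
      apply max_lt <;> simpa [Real.dist_eq]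
    refine mem_of_superset (Metric.ball_mem_nhds q hδpos) ?_
    intro p hp
    have hpd := hp
    rw [Metric.mem_ball, Prod.dist_eq, max_lt_iff] at hpd
    have hpx : |p.1 - q.1| < δ := by simpa [Real.dist_eq] using hpd.1
    have hpy : |p.2 - q.2| < δ := by simpa [Real.dist_eq] using hpd.2
    -- Step 1 : vertical segment
    have step1 : jet z₁ (q.1, p.2) = jet z₂ (q.1, p.2) := by
      have huniq := ODE_solution_unique_of_mem_Ioo
        (v := fun _ e => Bvec G H e) (s := fun _ => s₁ ∩ s₂) (K := K₁ ⊔ K₂)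
        (f := fun s => jet z₁ (q.1, s)) (g := fun s => jet z₂ (q.1, s))
        (t₀ := q.2) (a := q.2 - δ) (b := q.2 + δ)
        (fun _ _ => hKl2)
        (by constructor <;> linarith)
        ?_ ?_ ?_
      · have hmem2 : p.2 ∈ Ioo (q.2 - δ) (q.2 + δ) := by
          obtain ⟨hy1, hy2⟩ := abs_sub_lt_iff.1 hpy
          constructor <;> linarith
        exact huniq hmem2
      · intro t ht
        have hmt : |t - q.2| < δ := by
          rw [abs_sub_lt_iff]; obtain ⟨u1, u2⟩ := ht; constructor <;> linarith
        obtain ⟨hV', hm1, _⟩ := hball' q.1 t (by simpa using hδpos) hmt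
        exact ⟨hY₁ (q.1, t) hV', hm1⟩
      · intro t ht
        have hmt : |t - q.2| < δ := by
          rw [abs_sub_lt_iff]; obtain ⟨u1, u2⟩ := ht; constructor <;> linarith
        obtain ⟨hV', _, hm2⟩ := hball' q.1 t (by simpa using hδpos) hmt
        exact ⟨hY₂ (q.1, t) hV', hm2⟩
      · simpa using hqJ
    -- Step 2 : horizontal segment
    have step2 : jet z₁ (p.1, p.2) = jet z₂ (p.1, p.2) := by
      have huniq := ODE_solution_unique_of_mem_Ioo
        (v := fun _ e => Avec H e) (s := fun _ => s₁ ∩ s₂) (K := K₁ ⊔ K₂)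
        (f := fun t => jet z₁ (t, p.2)) (g := fun t => jet z₂ (t, p.2))
        (t₀ := q.1) (a := q.1 - δ) (b := q.1 + δ)
        (fun _ _ => hKl1)
        (by constructor <;> linarith)
        ?_ ?_ ?_
      · have hmem1 : p.1 ∈ Ioo (q.1 - δ) (q.1 + δ) := by
          obtain ⟨hx1, hx2⟩ := abs_sub_lt_iff.1 hpx
          constructor <;> linarith
        exact huniq hmem1
      · intro t ht
        have hmt : |t - q.1| < δ := by
          rw [abs_sub_lt_iff]; obtain ⟨u1, u2⟩ := ht; constructor <;> linarith
        obtain ⟨hV', hm1, _⟩ := hball' t p.2 hmt hpy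
        exact ⟨hX₁ (t, p.2) hV', hm1⟩
      · intro t ht
        have hmt : |t - q.1| < δ := by
          rw [abs_sub_lt_iff]; obtain ⟨u1, u2⟩ := ht; constructor <;> linarith
        obtain ⟨hV', _, hm2⟩ := hball' t p.2 hmt hpy
        exact ⟨hX₂ (t, p.2) hV', hm2⟩
      · exact step1
    exact ⟨(hball hp).1, by simpa using step2⟩
  have hTopen : IsOpen T := by
    rw [isOpen_iff_mem_nhds]
    rintro q ⟨hqV, hqJ⟩
    have hcont : ContinuousAt (fun q' => jet z₁ q' - jet z₂ q') q :=
      (hc₁ q hqV).sub (hc₂ q hqV)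
    have hne : ∀ᶠ q' in 𝓝 q, jet z₁ q' - jet z₂ q' ≠ 0 :=
      hcont.eventually_ne (sub_ne_zero.2 hqJ)
    filter_upwards [hV.mem_nhds hqV, hne] with q' h h'
    exact ⟨h, sub_ne_zero.1 h'⟩
  have hq₀S : q₀ ∈ S := by
    refine ⟨hq₀, ?_⟩
    funext i
    fin_cases i <;> simp [jet, h0, h1, h2]
  have hVS : V ⊆ S := by
    by_contra hns
    obtain ⟨q1, hq1V, hq1S⟩ : ∃ q1, q1 ∈ V ∧ q1 ∉ S := by
      simpa [Set.subset_def] using hns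
    have hq1T : q1 ∈ T := ⟨hq1V, fun h => hq1S ⟨hq1V, h⟩⟩
    obtain ⟨r, hrV, hrS, hrT⟩ := hVconn.isPreconnected S T hSopen hTopen
      (fun q hq => by
        by_cases h : jet z₁ q = jet z₂ q
        · exact Or.inl ⟨hq, h⟩
        · exact Or.inr ⟨hq, h⟩)
      ⟨q₀, hq₀, hq₀S⟩ ⟨q1, hq1V, hq1T⟩
    exact hrT.2 hrS.2
  intro q hq
  have hj := (hVS hq).2
  have := congrFun hj 2
  simpa [jet] using this
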